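/- arXiv:2302.07471 — 2 statements merged into one kernel-verified Lean document; each statement's English description precedes it below -/
import Mathlib

section
/- Under the identification dφ(U,u) = (U + Uᵀ, u) of the Lie algebra of Aff^s(n,ℝ) with the tangent space of 𝒩 at (Iₙ,0), the Fisher metric satisfies g((0,u),(0,v)) = uᵀv and g((U,0),(V,0)) = tr(UV) + tr(UVᵀ) for upper triangular U, V. -/
open Matrix

/-- The Fisher metric of the multivariate normal family at the point (Iₙ, 0), as an
inner product on tangent vectors (X, x) ∈ Sym(n,ℝ) × ℝⁿ:
g((X,x),(Y,y)) = (1/2)tr(XY) + xᵀy (mixed components vanish). -/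
noncomputable def gTan {n : ℕ} (P Q : Matrix (Fin n) (Fin n) ℝ × (Fin n → ℝ)) : ℝ :=
  (1 / 2 : ℝ) * Matrix.trace (P.1 * Q.1) + P.2 ⬝ᵥ Q.2

/-- The identification dφ(U,u) = (U + Uᵀ, u) of the Lie algebra of Aff^s(n,ℝ)
with the tangent space of 𝒩 at (Iₙ, 0). -/
def dphi {n : ℕ} (P : Matrix (Fin n) (Fin n) ℝ × (Fin n → ℝ)) :
    Matrix (Fin n) (Fin n) ℝ × (Fin n → ℝ) :=
  (P.1 + P.1ᵀ, P.2)

/-- under the identification dφ(U,u) = (U + Uᵀ, u), the Fisher metric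
satisfies g((0,u),(0,v)) = uᵀv and g((U,0),(V,0)) = tr(UV) + tr(UVᵀ) for upper
triangular U, V. -/
theorem fisher_metric_at_identity (n : ℕ) (U V : Matrix (Fin n) (Fin n) ℝ)
    (hU : U.BlockTriangular id) (hV : V.BlockTriangular id) (u v : Fin n → ℝ) :
    gTan (dphi (0, u)) (dphi (0, v)) = u ⬝ᵥ v ∧
    gTan (dphi (U, 0)) (dphi (V, 0)) = Matrix.trace (U * V) + Matrix.trace (U * Vᵀ) := by
  constructor
  · simp [gTan, dphi]
  · have h1 : Matrix.trace (Uᵀ * Vᵀ) = Matrix.trace (U * V) := by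
      rw [← Matrix.transpose_mul, Matrix.trace_transpose, Matrix.trace_mul_comm]
    have h2 : Matrix.trace (Uᵀ * V) = Matrix.trace (U * Vᵀ) := by
      rw [← Matrix.trace_transpose (Uᵀ * V), Matrix.transpose_mul, Matrix.transpose_transpose,
        Matrix.trace_mul_comm]
    simp only [gTan, dphi, Matrix.add_mul, Matrix.mul_add, Matrix.trace_add, h1, h2,
      dotProduct_zero]
    ring
end

section
/- If a statistical manifold (M,g,∇) is conjugate symmetric (R = R*), then for every real α the α-connection ∇^{(α)} = ∇̂ + αK is also conjugate symmetric: the curvature of ∇^{(α)} equals the curvature of ∇^{(−α)}. -/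
/-- if a statistical structure is conjugate symmetric (R = R*, where
∇ = ∇̂ + K and ∇* = ∇̂ − K), then for every real α the α-connection
∇^{(α)} = ∇̂ + αK is also conjugate symmetric: the curvature of ∇^{(α)} equals the
curvature of its conjugate ∇^{(−α)} = ∇̂ − αK. Here connections are left-invariant,
i.e. bilinear maps, and R(D)(X,Y)Z = D_X D_Y Z − D_Y D_X Z − D_{[X,Y]} Z. -/
theorem alpha_connection_conjugate_symmetric {V : Type*} [AddCommGroup V]
    [Module ℝ V]
    (bracket : V → V → V)
    (hat K : V →ₗ[ℝ] V →ₗ[ℝ] V)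
    (R : (V →ₗ[ℝ] V →ₗ[ℝ] V) → V → V → V → V)
    (hR : ∀ D X Y Z, R D X Y Z = D X (D Y Z) - D Y (D X Z) - D (bracket X Y) Z)
    (hconjsym : ∀ X Y Z, R (hat + K) X Y Z = R (hat - K) X Y Z) :
    ∀ (α : ℝ) (X Y Z : V), R (hat + α • K) X Y Z = R (hat - α • K) X Y Z := by
  have hS : ∀ X Y Z : V, hat X (K Y Z) + K X (hat Y Z) - hat Y (K X Z) - K Y (hat X Z)
      - K (bracket X Y) Z = 0 := by
    intro X Y Z
    have h := hconjsym X Y Z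
    simp only [hR, LinearMap.add_apply, LinearMap.sub_apply, map_add, map_sub] at h
    linear_combination (norm := module) ((2:ℝ)⁻¹ : ℝ) • h
  intro α X Y Z
  have h := hS X Y Z
  simp only [hR, LinearMap.add_apply, LinearMap.sub_apply, LinearMap.smul_apply,
    map_add, map_sub, map_smul]
  linear_combination (norm := module) ((2:ℝ) * α) • h
end
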